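/- Let k be a positive integer and let p be a k-radius prime. Then there exists a p-ary k-radius sequence of length ((p−1)/(2k))·(p+k−1) + 1; in particular f_k(p) ≤ ((p−1)/(2k))·(p+k−1) + 1. -/

import Mathlib

/-- An `n`-ary `k`-radius sequence of length `m`: any two distinct alphabet symbols
occur within distance `k` of each other somewhere in the sequence. -/
def IsRadiusSeq (k n m : ℕ) (a : Fin m → Fin n) : Prop :=
  ∀ x y : Fin n, x ≠ y →
    ∃ i j : Fin m, a i = x ∧ a j = y ∧ |(i.val : ℤ) - (j.val : ℤ)| ≤ (k : ℤ)

/-- `radiusMin k n` is `f_k(n)`, the shortest length of an `n`-ary `k`-radius sequence. -/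
noncomputable def radiusMin (k n : ℕ) : ℕ :=
  sInf {m | ∃ a : Fin m → Fin n, IsRadiusSeq k n m a}

/-- A prime `p` is a `k`-radius prime if `p ≡ 1 (mod 2k)` and the elements
`1^{(p-1)/k}, 2^{(p-1)/k}, …, k^{(p-1)/k}` of `(ℤ/pℤ)^*` are pairwise distinct. -/
def IsRadiusPrime (k p : ℕ) : Prop :=
  p.Prime ∧ p % (2 * k) = 1 ∧
    ∀ a b : ℕ, 1 ≤ a → a ≤ k → 1 ≤ b → b ≤ k →
      (a : ZMod p) ^ ((p - 1) / k) = (b : ZMod p) ^ ((p - 1) / k) → a = b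

/-- Additive shift constants for the blocks of the radius sequence. -/
def radChain (p k : ℕ) (d : ℕ → ZMod p) : ℕ → ZMod p
  | 0 => 0
  | j + 1 => radChain p k d j - d j + (k : ZMod p) * d (j + 1)

/-- The radius sequence: value at position `m`, with block length `Q`. -/
def radSeq (p k Q : ℕ) (d : ℕ → ZMod p) (m : ℕ) : ZMod p :=
  radChain p k d (m / Q) + (((m % Q : ℕ) : ZMod p) - (k : ZMod p)) * d (m / Q)

lemma radSeq_cover (p k Q : ℕ) [Fact p.Prime] (hk : 0 < k) (hQ : Q = p + k - 1)
    (d : ℕ → ZMod p) (hd : ∀ j, d j ≠ 0)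
    (x : ZMod p) (t j N : ℕ) (ht1 : 1 ≤ t) (htk : t ≤ k) (hj : j < N) :
    ∃ m, m + t ≤ N * Q ∧ radSeq p k Q d m = x ∧
      radSeq p k Q d (m + t) = x + (t : ZMod p) * d j := by
  have hp2 : 2 ≤ p := (Fact.out : p.Prime).two_le
  have hQpos : 0 < Q := by omega
  set c : ℕ → ZMod p := radChain p k d with hcdef
  set w : ZMod p := (x - c j) * (d j)⁻¹ + (k : ZMod p) with hw
  have hvlt : w.val < p := ZMod.val_lt w
  set v := w.val with hv
  have hvQ : v < Q := by omega
  have hcast : ((v : ℕ) : ZMod p) = w := by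
    simp [hv, ZMod.natCast_val, ZMod.cast_id]
  have hx : x = c j + (w - (k : ZMod p)) * d j := by
    rw [hw, add_sub_cancel_right, inv_mul_cancel_right₀ (hd j)]
    ring
  refine ⟨v + j * Q, ?_, ?_, ?_⟩
  · have h1 : v + t ≤ Q := by omega
    have h2 : j + 1 ≤ N := hj
    calc v + j * Q + t = (v + t) + j * Q := by ring
      _ ≤ Q + j * Q := by omega
      _ = (j + 1) * Q := by ring
      _ ≤ N * Q := Nat.mul_le_mul_right Q h2
  · have hdiv : (v + j * Q) / Q = j := by
      rw [Nat.add_mul_div_right _ _ hQpos, Nat.div_eq_of_lt hvQ, Nat.zero_add]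
    have hmod : (v + j * Q) % Q = v := by
      rw [Nat.add_mul_mod_self_right, Nat.mod_eq_of_lt hvQ]
    rw [radSeq, hdiv, hmod, hcast]
    linear_combination -hx
  · rcases lt_or_eq_of_le (by omega : v + t ≤ Q) with hlt | heq
    · have harr : v + j * Q + t = (v + t) + j * Q := by ring
      have hdiv : (v + j * Q + t) / Q = j := by
        rw [harr, Nat.add_mul_div_right _ _ hQpos, Nat.div_eq_of_lt hlt, Nat.zero_add]
      have hmod : (v + j * Q + t) % Q = v + t := by
        rw [harr, Nat.add_mul_mod_self_right, Nat.mod_eq_of_lt hlt]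
      have hcast2 : ((v + t : ℕ) : ZMod p) = w + (t : ZMod p) := by
        push_cast
        rw [hcast]
      rw [radSeq, hdiv, hmod, hcast2]
      linear_combination -hx
    · -- v + t = Q : wrap to next block
      have harr : v + j * Q + t = 0 + (j + 1) * Q := by
        rw [Nat.zero_add, Nat.add_mul, Nat.one_mul]
        omega
      have hdiv : (v + j * Q + t) / Q = j + 1 := by
        rw [harr, Nat.add_mul_div_right _ _ hQpos, Nat.zero_div, Nat.zero_add]
      have hmod : (v + j * Q + t) % Q = 0 := by
        rw [harr, Nat.add_mul_mod_self_right, Nat.zero_mod]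
      have hwt : w + (t : ZMod p) = (k : ZMod p) - 1 := by
        have h1 : ((v + t : ℕ) : ZMod p) = w + (t : ZMod p) := by
          push_cast
          rw [hcast]
        have h2 : ((v + t : ℕ) : ZMod p) = (k : ZMod p) - 1 := by
          rw [heq, hQ, show p + k - 1 = p + (k - 1) by omega]
          push_cast [Nat.cast_sub hk]
          simp
        rw [← h1, h2]
      have hc1 : c (j + 1) = c j - d j + (k : ZMod p) * d (j + 1) := rfl
      rw [radSeq, hdiv, hmod, ← hcdef, hc1]
      push_cast
      linear_combination (-(d j)) * hwt - hx

lemma rad_decomp (p k N : ℕ) [Fact p.Prime] (hk : 0 < k)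
    (hN : p - 1 = 2 * k * N) (hN1 : 1 ≤ N)
    (hdist : ∀ a b : ℕ, 1 ≤ a → a ≤ k → 1 ≤ b → b ≤ k →
      (a : ZMod p) ^ ((p - 1) / k) = (b : ZMod p) ^ ((p - 1) / k) → a = b)
    (g : (ZMod p)ˣ) (hg : ∀ x : (ZMod p)ˣ, x ∈ Subgroup.zpowers g)
    (e : ZMod p) (he : e ≠ 0) :
    ∃ t j : ℕ, 1 ≤ t ∧ t ≤ k ∧ j < N ∧
      (e = (t : ZMod p) * ((g ^ (k * j) : (ZMod p)ˣ) : ZMod p) ∨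
       e = -((t : ZMod p) * ((g ^ (k * j) : (ZMod p)ˣ) : ZMod p))) := by
  classical
  have hp : p.Prime := Fact.out
  have hp2 : 2 ≤ p := hp.two_le
  have hkk : 2 * k * 1 ≤ 2 * k * N := Nat.mul_le_mul_left (2 * k) hN1
  have hkp : k < p := by omega
  have hM : (p - 1) / k = 2 * N := by
    rw [hN, show 2 * k * N = k * (2 * N) by ring]
    exact Nat.mul_div_cancel_left _ hk
  set M := (p - 1) / k with hMdef
  have hMk : M * k = p - 1 := by rw [hM, hN]; ring
  have hMpos : 0 < M := by omega
  have horder : orderOf g = p - 1 := by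
    rw [orderOf_eq_card_of_forall_mem_zpowers hg]
    simp [ZMod.card_units_eq_totient, Nat.totient_prime hp]
  have hne : ∀ t : ℕ, 1 ≤ t → t ≤ k → (t : ZMod p) ≠ 0 := by
    intro t h1 h2
    rw [Ne, ZMod.natCast_eq_zero_iff]
    intro hdvd
    have := Nat.le_of_dvd (by omega) hdvd
    omega
  -- the set of M-th powers of 1..k equals all k-th roots of unity
  set S : Finset (ZMod p) := (Finset.Icc 1 k).image (fun t : ℕ => (t : ZMod p) ^ M) with hS
  have hScard : S.card = k := by
    rw [hS, Finset.card_image_of_injOn, Nat.card_Icc]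
    · omega
    · intro a ha b hb hab
      simp only [Finset.coe_Icc, Set.mem_Icc] at ha hb
      exact hdist a b ha.1 ha.2 hb.1 hb.2 hab
  have hSsub : S ⊆ Polynomial.nthRootsFinset k (1 : ZMod p) := by
    intro z hz
    rw [hS, Finset.mem_image] at hz
    obtain ⟨t, ht, rfl⟩ := hz
    rw [Finset.mem_Icc] at ht
    rw [Polynomial.mem_nthRootsFinset hk, ← pow_mul, hMk]
    exact ZMod.pow_card_sub_one_eq_one (hne t ht.1 ht.2)
  have hTcard : (Polynomial.nthRootsFinset k (1 : ZMod p)).card ≤ k := by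
    rw [Polynomial.nthRootsFinset_def]
    exact (Multiset.toFinset_card_le _).trans
      (by simpa using Polynomial.card_nthRoots k (1 : ZMod p))
  have hSeq : S = Polynomial.nthRootsFinset k (1 : ZMod p) :=
    Finset.eq_of_subset_of_card_le hSsub (by omega)
  have heT : e ^ M ∈ Polynomial.nthRootsFinset k (1 : ZMod p) := by
    rw [Polynomial.mem_nthRootsFinset hk, ← pow_mul, hMk]
    exact ZMod.pow_card_sub_one_eq_one he
  rw [← hSeq, hS, Finset.mem_image] at heT
  obtain ⟨t₀, ht₀, heq⟩ := heT
  rw [Finset.mem_Icc] at ht₀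
  have ht₀ne : (t₀ : ZMod p) ≠ 0 := hne t₀ ht₀.1 ht₀.2
  set v : ZMod p := e * (t₀ : ZMod p)⁻¹ with hvdef
  have hv0 : v ≠ 0 := mul_ne_zero he (inv_ne_zero ht₀ne)
  have hvM : v ^ M = 1 := by
    rw [hvdef, mul_pow, ← heq, inv_pow, mul_inv_cancel₀ (pow_ne_zero _ ht₀ne)]
  obtain ⟨u, hu⟩ := (isUnit_iff_ne_zero.mpr hv0)
  have huM : u ^ M = 1 := by
    apply Units.ext
    push_cast [hu]
    exact hvM
  obtain ⟨a, ha⟩ : ∃ n : ℕ, g ^ n = u := by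
    have := hg u
    rwa [← mem_powers_iff_mem_zpowers, Submonoid.mem_powers_iff] at this
  have hka : k ∣ a := by
    have h1 : g ^ (a * M) = 1 := by rw [pow_mul, ha, huM]
    have h2 : (p - 1) ∣ a * M := by
      rw [← horder]; exact orderOf_dvd_of_pow_eq_one h1
    have h3 : k * M ∣ a * M := by rwa [show k * M = p - 1 by rw [← hMk]; ring]
    exact (mul_dvd_mul_iff_right (by omega : M ≠ 0)).mp h3
  obtain ⟨s, rfl⟩ := hka
  have hg2N : g ^ (k * (2 * N)) = 1 := by
    rw [show k * (2 * N) = p - 1 by rw [hN]; ring, ← horder]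
    exact pow_orderOf_eq_one g
  set j' := s % (2 * N) with hj'
  have hj'lt : j' < 2 * N := Nat.mod_lt _ (by omega)
  have hgks : g ^ (k * s) = g ^ (k * j') := by
    conv_lhs => rw [show s = 2 * N * (s / (2 * N)) + j' from
      by rw [hj']; exact (Nat.div_add_mod s (2 * N)).symm]
    rw [show k * (2 * N * (s / (2 * N)) + j') = k * (2 * N) * (s / (2 * N)) + k * j' by ring,
      pow_add, pow_mul, hg2N, one_pow, one_mul]
  have hgN : ((g ^ (k * N) : (ZMod p)ˣ) : ZMod p) = -1 := by
    have husq : (g ^ (k * N)) ^ 2 = 1 := by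
      rw [← pow_mul, show k * N * 2 = k * (2 * N) by ring, hg2N]
    have hsq : ((g ^ (k * N) : (ZMod p)ˣ) : ZMod p) ^ 2 = 1 := by
      rw [← Units.val_pow_eq_pow_val, husq, Units.val_one]
    rcases sq_eq_one_iff.mp hsq with h1 | h1
    · exfalso
      have hu1 : g ^ (k * N) = 1 := Units.ext (by rw [Units.val_one]; exact h1)
      have hdvd := orderOf_dvd_of_pow_eq_one hu1
      rw [horder] at hdvd
      have hkN : 0 < k * N := Nat.mul_pos hk (by omega)
      have hle := Nat.le_of_dvd hkN hdvd
      have h2kN : p - 1 = 2 * (k * N) := by rw [hN]; ring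
      omega
    · exact h1
  have hev : e = (t₀ : ZMod p) * ((g ^ (k * j') : (ZMod p)ˣ) : ZMod p) := by
    have hvv : ((g ^ (k * j') : (ZMod p)ˣ) : ZMod p) = v := by
      rw [← hgks, ha, hu]
    rw [hvv, hvdef]
    field_simp
  rcases lt_or_ge j' N with hlt | hge
  · exact ⟨t₀, j', ht₀.1, ht₀.2, hlt, Or.inl hev⟩
  · refine ⟨t₀, j' - N, ht₀.1, ht₀.2, by omega, Or.inr ?_⟩
    have hsplit : g ^ (k * j') = g ^ (k * N) * g ^ (k * (j' - N)) := by
      rw [← pow_add, ← Nat.mul_add, Nat.add_sub_cancel' hge]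
    rw [hev, hsplit, Units.val_mul, hgN]
    ring

theorem stmt_13 (k p : ℕ) (hk : 0 < k) (hp : IsRadiusPrime k p) :
    (∃ a : Fin (((p - 1) / (2 * k)) * (p + k - 1) + 1) → Fin p,
        IsRadiusSeq k p (((p - 1) / (2 * k)) * (p + k - 1) + 1) a) ∧
      radiusMin k p ≤ ((p - 1) / (2 * k)) * (p + k - 1) + 1 := by
  obtain ⟨hpp, hmod, hdist⟩ := hp
  haveI : Fact p.Prime := ⟨hpp⟩
  have hp2 : 2 ≤ p := hpp.two_le
  -- basic arithmetic
  have hq := Nat.div_add_mod p (2 * k)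
  set q := p / (2 * k) with hqdef
  have hpq : p = 2 * k * q + 1 := by omega
  have hq1 : 1 ≤ q := by
    rcases Nat.eq_zero_or_pos q with h | h
    · rw [h, Nat.mul_zero] at hpq; omega
    · exact h
  have hN : (p - 1) / (2 * k) = q := by
    rw [show p - 1 = 2 * k * q by omega]
    exact Nat.mul_div_cancel_left _ (by omega)
  set N := (p - 1) / (2 * k) with hNdef
  have hkk : 2 * k * 1 ≤ 2 * k * q := Nat.mul_le_mul_left (2 * k) hq1
  have hkp : k < p := by omega
  have hNpos : 1 ≤ N := by omega
  have hN2 : p - 1 = 2 * k * N := by rw [hN]; omega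
  set Q := p + k - 1 with hQdef
  set L := N * Q + 1 with hLdef
  -- generator
  obtain ⟨g, hg⟩ := IsCyclic.exists_generator (α := (ZMod p)ˣ)
  set d : ℕ → ZMod p := fun j => ((g ^ (k * j) : (ZMod p)ˣ) : ZMod p) with hd
  have hdne : ∀ j, d j ≠ 0 := fun j => Units.ne_zero _
  -- the sequence
  have key : ∃ a : Fin L → Fin p, IsRadiusSeq k p L a := by
    refine ⟨fun m => ⟨(radSeq p k Q d m.val).val, ZMod.val_lt _⟩, ?_⟩
    intro x y hxy
    set X : ZMod p := ((x : ℕ) : ZMod p) with hX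
    set Y : ZMod p := ((y : ℕ) : ZMod p) with hY
    have hvalx : X.val = (x : ℕ) := ZMod.val_cast_of_lt x.isLt
    have hvaly : Y.val = (y : ℕ) := ZMod.val_cast_of_lt y.isLt
    have hXY : Y - X ≠ 0 := by
      intro h
      apply hxy
      have hYX : Y = X := by linear_combination h
      have hvv : Y.val = X.val := by rw [hYX]
      rw [hvalx, hvaly] at hvv
      exact Fin.ext hvv.symm
    obtain ⟨t, j, ht1, htk, hjN, hcase⟩ :=
      rad_decomp p k N hk hN2 hNpos hdist g hg (Y - X) hXY
    rcases hcase with hcase | hcase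
    · -- Y - X = t * d j
      obtain ⟨m, hmle, hsm, hsmt⟩ :=
        radSeq_cover p k Q hk hQdef d hdne X t j N ht1 htk hjN
      have hmL : m < L := by omega
      have hmtL : m + t < L := by omega
      refine ⟨⟨m, hmL⟩, ⟨m + t, hmtL⟩, ?_, ?_, ?_⟩
      · apply Fin.ext
        show (radSeq p k Q d m).val = (x : ℕ)
        rw [hsm, hvalx]
      · apply Fin.ext
        show (radSeq p k Q d (m + t)).val = (y : ℕ)
        rw [hsmt, ← hcase, show X + (Y - X) = Y by ring, hvaly]
      · show |((m : ℕ) : ℤ) - ((m + t : ℕ) : ℤ)| ≤ (k : ℤ)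
        rw [abs_le]
        constructor <;> push_cast <;> omega
    · -- X - Y = t * d j
      have hcase' : Y + (t : ZMod p) * d j = X := by
        show Y + (t : ZMod p) * ((g ^ (k * j) : (ZMod p)ˣ) : ZMod p) = X
        linear_combination hcase
      obtain ⟨m, hmle, hsm, hsmt⟩ :=
        radSeq_cover p k Q hk hQdef d hdne Y t j N ht1 htk hjN
      have hmL : m < L := by omega
      have hmtL : m + t < L := by omega
      refine ⟨⟨m + t, hmtL⟩, ⟨m, hmL⟩, ?_, ?_, ?_⟩
      · apply Fin.ext
        show (radSeq p k Q d (m + t)).val = (x : ℕ)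
        rw [hsmt, hcase', hvalx]
      · apply Fin.ext
        show (radSeq p k Q d m).val = (y : ℕ)
        rw [hsm, hvaly]
      · show |((m + t : ℕ) : ℤ) - ((m : ℕ) : ℤ)| ≤ (k : ℤ)
        rw [abs_le]
        constructor <;> push_cast <;> omega
  exact ⟨key, Nat.sInf_le key⟩
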